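/- Let U be a random vector taking values in the nonnegative orthant of ℝ^n and Y = 𝒫(U). Then for every y ∈ ℤ^n_{≥0} such that P_Y(y) > 0 and P_Y(y + 1_i) > 0, and every i, j ∈ [1:n], the conditional covariance satisfies [Var(U | Y = y)]_{ij} = E[U_i | Y = y] · ( E[U_j | Y = y + 1_i] − E[U_j | Y = y] ). -/

import Mathlib

open MeasureTheory ProbabilityTheory

noncomputable section

/-- The probability mass function of the Poisson distribution with (real) mean `m`,
evaluated at `k` (with the convention `0 ^ 0 = 1`). -/
def poissonP (m : ℝ) (k : ℕ) : ℝ := m ^ k * Real.exp (-m) / (Nat.factorial k)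

/-- `Y = 𝒫(U)` : `U` takes values in the nonnegative orthant and, conditionally on `U = u`,
the coordinates of `Y` are independent with `Y i` Poisson distributed with mean `u i`. -/
def IsPoissonObs {Ω : Type} [MeasurableSpace Ω] (μ : Measure Ω) {n : ℕ}
    (U : Ω → Fin n → ℝ) (Y : Ω → Fin n → ℕ) : Prop :=
  Measurable U ∧ Measurable Y ∧ (∀ ω i, 0 ≤ U ω i) ∧
    ∀ (y : Fin n → ℕ) (B : Set (Fin n → ℝ)), MeasurableSet B →
      (μ {ω | Y ω = y ∧ U ω ∈ B}).toReal
        = ∫ ω in {ω | U ω ∈ B}, ∏ i, poissonP (U ω i) (y i) ∂μ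

/-- Conditional expectation of `f` given the event `A`. -/
def condExpEvent {Ω : Type} [MeasurableSpace Ω] (μ : Measure Ω) (A : Set Ω)
    (f : Ω → ℝ) : ℝ :=
  (∫ ω in A, f ω ∂μ) / (μ A).toReal


open scoped ENNReal

lemma poissonP_nonneg {m : ℝ} (hm : 0 ≤ m) (k : ℕ) : 0 ≤ poissonP m k := by
  unfold poissonP; positivity

lemma poissonP_le_one {m : ℝ} (hm : 0 ≤ m) (k : ℕ) : poissonP m k ≤ 1 := by
  unfold poissonP
  rw [div_le_one (by positivity)]
  have h := Real.pow_div_factorial_le_exp (x := m) hm k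
  rw [div_le_iff₀ (by positivity)] at h
  calc m ^ k * Real.exp (-m) ≤ Real.exp m * (k.factorial : ℝ) * Real.exp (-m) := by
        apply mul_le_mul_of_nonneg_right h (Real.exp_nonneg _)
    _ = (k.factorial : ℝ) := by
        rw [mul_comm (Real.exp m), mul_assoc, ← Real.exp_add]
        simp

lemma poissonP_succ (m : ℝ) (k : ℕ) :
    ((k : ℝ) + 1) * poissonP m (k + 1) = m * poissonP m k := by
  unfold poissonP
  rw [Nat.factorial_succ, pow_succ]
  push_cast
  have h1 : (k.factorial : ℝ) ≠ 0 := Nat.cast_ne_zero.2 k.factorial_pos.ne'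
  have h2 : (k : ℝ) + 1 ≠ 0 := by positivity
  field_simp

def Gfun {n : ℕ} (y : Fin n → ℕ) (u : Fin n → ℝ) : ℝ := ∏ i, poissonP (u i) (y i)

lemma measurable_poissonP (k : ℕ) : Measurable (fun m => poissonP m k) := by
  unfold poissonP; fun_prop

lemma measurable_Gfun {n : ℕ} (y : Fin n → ℕ) : Measurable (Gfun y) := by
  unfold Gfun
  exact Finset.measurable_prod _ fun i _ => (measurable_poissonP (y i)).comp (measurable_pi_apply i)

lemma Gfun_nonneg {n : ℕ} (y : Fin n → ℕ) {u : Fin n → ℝ} (hu : ∀ i, 0 ≤ u i) :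
    0 ≤ Gfun y u :=
  Finset.prod_nonneg fun i _ => poissonP_nonneg (hu i) _

lemma Gfun_le_one {n : ℕ} (y : Fin n → ℕ) {u : Fin n → ℝ} (hu : ∀ i, 0 ≤ u i) :
    Gfun y u ≤ 1 :=
  Finset.prod_le_one (fun i _ => poissonP_nonneg (hu i) _) (fun i _ => poissonP_le_one (hu i) _)

lemma Gfun_succ {n : ℕ} (y : Fin n → ℕ) (i : Fin n) (u : Fin n → ℝ) :
    u i * Gfun y u = ((y i : ℝ) + 1) * Gfun (y + Pi.single i 1 : Fin n → ℕ) u := by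
  unfold Gfun
  rw [← Finset.mul_prod_erase Finset.univ (fun j => poissonP (u j) (y j)) (Finset.mem_univ i)]
  have h2 : (∏ j, poissonP (u j) ((y + Pi.single i 1 : Fin n → ℕ) j))
      = poissonP (u i) ((y + Pi.single i 1 : Fin n → ℕ) i)
        * ∏ j ∈ Finset.univ.erase i, poissonP (u j) ((y + Pi.single i 1 : Fin n → ℕ) j) :=
    (Finset.mul_prod_erase Finset.univ _ (Finset.mem_univ i)).symm
  rw [h2]
  have herase : (∏ j ∈ Finset.univ.erase i, poissonP (u j) ((y + Pi.single i 1 : Fin n → ℕ) j))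
      = ∏ j ∈ Finset.univ.erase i, poissonP (u j) (y j) :=
    Finset.prod_congr rfl fun j hj => by
      rw [Pi.add_apply, Pi.single_eq_of_ne (Finset.ne_of_mem_erase hj), add_zero]
  have hi : (y + Pi.single i 1 : Fin n → ℕ) i = y i + 1 := by simp
  rw [herase, hi, ← mul_assoc, ← mul_assoc, poissonP_succ]

variable {Ω : Type} [MeasurableSpace Ω] (μ : Measure Ω) {n : ℕ}
  {U : Ω → Fin n → ℝ} {Y : Ω → Fin n → ℕ}

lemma keyMeasure [IsProbabilityMeasure μ] (hPo : IsPoissonObs μ U Y) (y : Fin n → ℕ) :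
    (μ.restrict {ω | Y ω = y}).map U
      = (μ.map U).withDensity (fun u => ENNReal.ofReal (Gfun y u)) := by
  obtain ⟨hU, hY, hpos, hlaw⟩ := hPo
  ext B hB
  rw [Measure.map_apply hU hB, Measure.restrict_apply (hU hB),
      withDensity_apply _ hB, setLIntegral_map hB (measurable_Gfun y).ennreal_ofReal hU]
  have hint : Integrable (fun ω => ∏ i, poissonP (U ω i) (y i))
      (μ.restrict {ω | U ω ∈ B}) := by
    apply Integrable.mono' (integrable_const (1 : ℝ))
    · exact ((measurable_Gfun y).comp hU).aestronglyMeasurable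
    · filter_upwards with ω
      show ‖Gfun y (U ω)‖ ≤ 1
      rw [Real.norm_eq_abs, abs_of_nonneg (Gfun_nonneg y (hpos ω))]
      exact Gfun_le_one y (hpos ω)
  have hnn : 0 ≤ᵐ[μ.restrict {ω | U ω ∈ B}] fun ω => ∏ i, poissonP (U ω i) (y i) :=
    Filter.Eventually.of_forall fun ω => Gfun_nonneg y (hpos ω)
  have hset : U ⁻¹' B ∩ {ω | Y ω = y} = {ω | Y ω = y ∧ U ω ∈ B} := by
    ext ω; simp [Set.mem_inter_iff, and_comm]
  rw [hset, ← ENNReal.ofReal_toReal (measure_ne_top μ _), hlaw y B hB,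
      ofReal_integral_eq_lintegral_ofReal hint hnn]
  rfl

lemma transfer [IsProbabilityMeasure μ] (hPo : IsPoissonObs μ U Y) (y : Fin n → ℕ)
    {f : (Fin n → ℝ) → ℝ≥0∞} (hf : Measurable f) :
    ∫⁻ ω in {ω | Y ω = y}, f (U ω) ∂μ
      = ∫⁻ ω, f (U ω) * ENNReal.ofReal (Gfun y (U ω)) ∂μ := by
  have hU := hPo.1
  calc ∫⁻ ω in {ω | Y ω = y}, f (U ω) ∂μ
      = ∫⁻ u, f u ∂((μ.restrict {ω | Y ω = y}).map U) := (lintegral_map hf hU).symm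
    _ = ∫⁻ u, f u ∂((μ.map U).withDensity fun u => ENNReal.ofReal (Gfun y u)) := by
        rw [keyMeasure μ hPo y]
    _ = ∫⁻ u, f u * ENNReal.ofReal (Gfun y u) ∂(μ.map U) := by
        rw [lintegral_withDensity_eq_lintegral_mul _ (measurable_Gfun y).ennreal_ofReal hf]
        simp [mul_comm]
    _ = ∫⁻ ω, f (U ω) * ENNReal.ofReal (Gfun y (U ω)) ∂μ :=
        lintegral_map (hf.mul (measurable_Gfun y).ennreal_ofReal) hU

lemma mass [IsProbabilityMeasure μ] (hPo : IsPoissonObs μ U Y) (y : Fin n → ℕ) :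
    μ {ω | Y ω = y} = ∫⁻ ω, ENNReal.ofReal (Gfun y (U ω)) ∂μ := by
  have := transfer μ hPo y (f := fun _ => (1 : ℝ≥0∞)) measurable_const
  simpa using this


/-- for `Y = 𝒫(U)`, whenever `P_Y(y) > 0` and `P_Y(y + 1_i) > 0`,
`[Var(U | Y = y)]_{ij} = E[U_i | Y = y] (E[U_j | Y = y + 1_i] - E[U_j | Y = y])`. -/
theorem stmt7 {Ω : Type} [MeasurableSpace Ω] (μ : Measure Ω) [IsProbabilityMeasure μ]
    {n : ℕ} (U : Ω → Fin n → ℝ) (Y : Ω → Fin n → ℕ)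
    (hPo : IsPoissonObs μ U Y) :
    ∀ y : Fin n → ℕ, 0 < (μ {ω | Y ω = y}).toReal → ∀ i : Fin n,
      0 < (μ {ω | Y ω = y + Pi.single i 1}).toReal → ∀ j : Fin n,
        condExpEvent μ {ω | Y ω = y} (fun ω => U ω i * U ω j)
            - condExpEvent μ {ω | Y ω = y} (fun ω => U ω i)
              * condExpEvent μ {ω | Y ω = y} (fun ω => U ω j)
          = condExpEvent μ {ω | Y ω = y} (fun ω => U ω i)
              * (condExpEvent μ {ω | Y ω = y + Pi.single i 1} (fun ω => U ω j)
                  - condExpEvent μ {ω | Y ω = y} (fun ω => U ω j)) := by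

  obtain ⟨hU, hY, hpos, hlaw⟩ := id hPo
  intro y hy i hyi j
  have hUi : Measurable fun ω => U ω i := (measurable_pi_apply i).comp hU
  have hUj : Measurable fun ω => U ω j := (measurable_pi_apply j).comp hU
  have hc0 : (0:ℝ) ≤ (y i : ℝ) + 1 := by positivity
  have hG' : Measurable fun ω => ENNReal.ofReal (Gfun (y + Pi.single i 1) (U ω)) :=
    ((measurable_Gfun _).comp hU).ennreal_ofReal
  have hGj : Measurable fun ω => ENNReal.ofReal (U ω j)
      * ENNReal.ofReal (Gfun (y + Pi.single i 1) (U ω)) :=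
    hUj.ennreal_ofReal.mul ((measurable_Gfun _).comp hU).ennreal_ofReal
  -- I1
  have I1 : (∫ ω in {ω | Y ω = y}, U ω i ∂μ)
      = ((y i : ℝ) + 1) * (μ {ω | Y ω = y + Pi.single i 1}).toReal := by
    rw [integral_eq_lintegral_of_nonneg_ae
        (Filter.Eventually.of_forall fun ω => hpos ω i) hUi.aestronglyMeasurable.restrict,
      transfer μ hPo y (f := fun u => ENNReal.ofReal (u i)) (measurable_pi_apply i).ennreal_ofReal]
    have hpt : ∀ ω, ENNReal.ofReal (U ω i) * ENNReal.ofReal (Gfun y (U ω))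
        = ENNReal.ofReal ((y i : ℝ) + 1)
          * ENNReal.ofReal (Gfun (y + Pi.single i 1) (U ω)) := fun ω => by
      rw [← ENNReal.ofReal_mul (hpos ω i), Gfun_succ, ENNReal.ofReal_mul hc0]
    rw [lintegral_congr hpt,
      lintegral_const_mul _ hG',
      ← mass μ hPo (y + Pi.single i 1), ENNReal.toReal_mul, ENNReal.toReal_ofReal hc0]
  -- I2
  have I2 : (∫ ω in {ω | Y ω = y}, U ω i * U ω j ∂μ)
      = ((y i : ℝ) + 1) * ∫ ω in {ω | Y ω = y + Pi.single i 1}, U ω j ∂μ := by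
    rw [integral_eq_lintegral_of_nonneg_ae
        (Filter.Eventually.of_forall fun ω => mul_nonneg (hpos ω i) (hpos ω j))
        (hUi.mul hUj).aestronglyMeasurable.restrict,
      transfer μ hPo y (f := fun u => ENNReal.ofReal (u i * u j))
        (((measurable_pi_apply i).mul (measurable_pi_apply j)).ennreal_ofReal)]
    have hpt : ∀ ω, ENNReal.ofReal (U ω i * U ω j) * ENNReal.ofReal (Gfun y (U ω))
        = ENNReal.ofReal ((y i : ℝ) + 1)
          * (ENNReal.ofReal (U ω j)
              * ENNReal.ofReal (Gfun (y + Pi.single i 1) (U ω))) := fun ω => by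
      have h : U ω i * U ω j * Gfun y (U ω)
          = ((y i : ℝ) + 1) * (U ω j * Gfun (y + Pi.single i 1) (U ω)) := by
        calc U ω i * U ω j * Gfun y (U ω)
            = U ω j * (U ω i * Gfun y (U ω)) := by ring
          _ = U ω j * (((y i : ℝ) + 1) * Gfun (y + Pi.single i 1) (U ω)) := by
              rw [Gfun_succ]
          _ = _ := by ring
      rw [← ENNReal.ofReal_mul (mul_nonneg (hpos ω i) (hpos ω j)), h,
        ENNReal.ofReal_mul hc0, ENNReal.ofReal_mul (hpos ω j)]
    rw [lintegral_congr hpt, lintegral_const_mul _ hGj,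
      ← transfer μ hPo (y + Pi.single i 1) (f := fun u => ENNReal.ofReal (u j))
        (measurable_pi_apply j).ennreal_ofReal,
      ENNReal.toReal_mul, ENNReal.toReal_ofReal hc0,
      ← integral_eq_lintegral_of_nonneg_ae
        (Filter.Eventually.of_forall fun ω => hpos ω j) hUj.aestronglyMeasurable.restrict]
  -- algebra
  unfold condExpEvent
  rw [I1, I2]
  have ha : (μ {ω | Y ω = y}).toReal ≠ 0 := hy.ne'
  have hb : (μ {ω | Y ω = y + Pi.single i 1}).toReal ≠ 0 := hyi.ne'
  field_simp
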